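/- Let γ be a simple curve starting at a point x in the interior of a simple closed curve P and ending in the exterior of P, meeting P transversally. Let S be a simple arc with endpoints on P and interior in int P, splitting int P into T₁ and T₂ with boundary P-arcs A₁ and A₂. If γ is disjoint from S and x ∈ T₁, then the first intersection point of γ with P lies on the closed arc A₁. -/

import Mathlib

/-- A simple closed curve in the plane: the image of a continuous injection of the circle. -/
def IsSimpleClosedCurve (P : Set (ℝ × ℝ)) : Prop :=
  ∃ f : AddCircle (1 : ℝ) → ℝ × ℝ, Continuous f ∧ Function.Injective f ∧ Set.range f = P

/-- The interior of a simple closed curve: points of the complement whose connected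
component in the complement is bounded. -/
def JordanInterior (P : Set (ℝ × ℝ)) : Set (ℝ × ℝ) :=
  {y | y ∉ P ∧ Bornology.IsBounded (connectedComponentIn Pᶜ y)}

/-- The exterior of a simple closed curve: points of the complement whose connected
component in the complement is unbounded. -/
def JordanExterior (P : Set (ℝ × ℝ)) : Set (ℝ × ℝ) :=
  {y | y ∉ P ∧ ¬ Bornology.IsBounded (connectedComponentIn Pᶜ y)}

/-- A simple arc in the plane from `a` to `b` with image `γ`. -/
def IsArc (γ : Set (ℝ × ℝ)) (a b : ℝ × ℝ) : Prop :=
  ∃ f : ℝ → ℝ × ℝ, ContinuousOn f (Set.Icc 0 1) ∧ Set.InjOn f (Set.Icc 0 1) ∧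
    f 0 = a ∧ f 1 = b ∧ γ = f '' Set.Icc 0 1

/-- With `S` a simple arc splitting the interior of a simple closed curve `P` into
components `T₁` (bounded by `A₁ ∪ S`) and `T₂` (bounded by `A₂ ∪ S`): a simple curve
starting at `x ∈ T₁`, ending in the exterior of `P` and disjoint from `S`, first
meets `P` at a point of the closed arc `closure A₁`. -/
theorem first_crossing_on_A1 (P S : Set (ℝ × ℝ)) (p q : ℝ × ℝ)
    (hP : IsSimpleClosedCurve P) (hS : IsArc S p q) (hpq : p ≠ q)
    (hpP : p ∈ P) (hqP : q ∈ P) (hSP : S ∩ P = {p, q})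
    (hSint : S \ {p, q} ⊆ JordanInterior P)
    (A₁ A₂ T₁ T₂ : Set (ℝ × ℝ))
    (hA : A₁ ≠ A₂) (hA₁ : IsConnected A₁) (hA₂ : IsConnected A₂)
    (hAdisj : Disjoint A₁ A₂) (hAunion : P \ {p, q} = A₁ ∪ A₂)
    (hT : T₁ ≠ T₂) (hT₁ : IsConnected T₁) (hT₂ : IsConnected T₂)
    (hTdisj : Disjoint T₁ T₂) (hTunion : JordanInterior P \ S = T₁ ∪ T₂)
    (hfr₁ : frontier T₁ = A₁ ∪ S) (hfr₂ : frontier T₂ = A₂ ∪ S)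
    (x : ℝ × ℝ) (hx : x ∈ T₁)
    (γ : ℝ → ℝ × ℝ) (hγ : ContinuousOn γ (Set.Icc 0 1))
    (hγinj : Set.InjOn γ (Set.Icc 0 1)) (hγ0 : γ 0 = x)
    (hγ1 : γ 1 ∈ JordanExterior P)
    (hγS : ∀ t ∈ Set.Icc (0 : ℝ) 1, γ t ∉ S)
    (t₀ : ℝ) (ht₀ : t₀ ∈ Set.Icc (0 : ℝ) 1) (ht₀P : γ t₀ ∈ P)
    (ht₀first : ∀ s ∈ Set.Ico (0 : ℝ) t₀, γ s ∉ P) :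
    γ t₀ ∈ closure A₁ := by
  obtain ⟨ht₀0, ht₀1⟩ := ht₀
  have hT₁sub : T₁ ⊆ JordanInterior P \ S := hTunion ▸ Set.subset_union_left
  have hT₂sub : T₂ ⊆ JordanInterior P \ S := hTunion ▸ Set.subset_union_right
  have hT₁P : ∀ y ∈ T₁, y ∉ P := fun y hy => (hT₁sub hy).1.1
  have hT₂P : ∀ y ∈ T₂, y ∉ P := fun y hy => (hT₂sub hy).1.1
  -- t₀ > 0
  have ht₀pos : 0 < t₀ := by
    rcases lt_or_eq_of_le ht₀0 with h | h
    · exact h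
    · exact absurd ht₀P (by rw [← h, hγ0]; exact hT₁P x hx)
  set K := γ '' Set.Ico 0 t₀ with hKdef
  have hIcosub : Set.Ico (0:ℝ) t₀ ⊆ Set.Icc 0 1 := fun s hs => ⟨hs.1, hs.2.le.trans ht₀1⟩
  have hKconn : IsPreconnected K := isPreconnected_Ico.image γ (hγ.mono hIcosub)
  have hKP : ∀ y ∈ K, y ∉ P := by rintro y ⟨s, hs, rfl⟩; exact ht₀first s hs
  have hKS : ∀ y ∈ K, y ∉ S := by rintro y ⟨s, hs, rfl⟩; exact hγS s (hIcosub hs)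
  have hxK : x ∈ K := ⟨0, ⟨le_refl 0, ht₀pos⟩, hγ0⟩
  -- K lies in the Jordan interior
  have hKint : K ⊆ JordanInterior P := by
    intro y hy
    have hsub : K ⊆ connectedComponentIn Pᶜ x :=
      hKconn.subset_connectedComponentIn hxK (fun z hz => hKP z hz)
    refine ⟨hKP y hy, ?_⟩
    rw [show connectedComponentIn Pᶜ y = connectedComponentIn Pᶜ x from (connectedComponentIn_eq (hsub hy)).symm]
    exact (hT₁sub hx).1.2
  have hKTT : K ⊆ T₁ ∪ T₂ := fun y hy => hTunion ▸ (⟨hKint hy, hKS y hy⟩ : _)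
  -- membership in closures, for points of K
  have hcloT₁ : closure T₁ ⊆ T₁ ∪ (A₁ ∪ S) := by
    rw [← hfr₁, ← closure_eq_self_union_frontier]
  have hcloT₂ : closure T₂ ⊆ T₂ ∪ (A₂ ∪ S) := by
    rw [← hfr₂, ← closure_eq_self_union_frontier]
  have hA₁P : A₁ ⊆ P := fun z hz => (hAunion ▸ (Set.mem_union_left A₂ hz : _) : z ∈ P \ {p, q}).1
  have hA₂P : A₂ ⊆ P := fun z hz => (hAunion ▸ (Set.mem_union_right A₁ hz : _) : z ∈ P \ {p, q}).1
  have hmem₁ : ∀ z ∈ K, z ∈ closure T₁ → z ∈ T₁ := by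
    intro z hzK hz
    rcases hcloT₁ hz with h | h | h
    · exact h
    · exact absurd (hA₁P h) (hKP z hzK)
    · exact absurd h (hKS z hzK)
  have hmem₂ : ∀ z ∈ K, z ∈ closure T₂ → z ∈ T₂ := by
    intro z hzK hz
    rcases hcloT₂ hz with h | h | h
    · exact h
    · exact absurd (hA₂P h) (hKP z hzK)
    · exact absurd h (hKS z hzK)
  -- K stays in T₁
  have hKT₁ : K ⊆ T₁ := by
    intro y hy
    rcases hKTT hy with h | h
    · exact h
    · exfalso
      have hcover : K ⊆ (closure T₂)ᶜ ∪ (closure T₁)ᶜ := by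
        intro z hz
        by_contra hc
        try push_neg at hc
        simp only [Set.mem_union, Set.mem_compl_iff, not_or, not_not] at hc
        exact hTdisj.ne_of_mem (hmem₁ z hz hc.2) (hmem₂ z hz hc.1) rfl
      have hxU : x ∈ K ∩ (closure T₂)ᶜ := by
        refine ⟨hxK, fun hc => ?_⟩
        exact hTdisj.ne_of_mem hx (hmem₂ x hxK hc) rfl
      have hyV : y ∈ K ∩ (closure T₁)ᶜ := by
        refine ⟨hy, fun hc => ?_⟩
        exact hTdisj.ne_of_mem (hmem₁ y hy hc) h rfl
      obtain ⟨z, hzK, hz₂, hz₁⟩ := hKconn _ _ (isClosed_closure.isOpen_compl)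
        (isClosed_closure.isOpen_compl) hcover ⟨x, hxU⟩ ⟨y, hyV⟩
      rcases hKTT hzK with hzT | hzT
      · exact hz₁ (subset_closure hzT)
      · exact hz₂ (subset_closure hzT)
  -- γ t₀ is a limit of points of K
  have h1 : ContinuousWithinAt γ (Set.Ico 0 t₀) t₀ :=
    (hγ t₀ ⟨ht₀0, ht₀1⟩).mono hIcosub
  have h2 : t₀ ∈ closure (Set.Ico (0:ℝ) t₀) := by
    rw [closure_Ico ht₀pos.ne]
    exact ⟨ht₀0, le_refl _⟩
  have h3 : γ t₀ ∈ closure K := h1.mem_closure_image h2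
  have h4 : γ t₀ ∈ closure T₁ := closure_mono hKT₁ h3
  rcases hcloT₁ h4 with h | h | h
  · exact absurd ht₀P (hT₁P _ h)
  · exact subset_closure h
  · exact absurd h (hγS t₀ ⟨ht₀0, ht₀1⟩)
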